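/- There exists an absolute constant c > 0 such that for every finite set A ⊆ ℤ_{>0} with |AA| ≤ K|A| (K a positive integer), one has E_+(A) ≤ c^K |A|^2. -/

import Mathlib

open scoped Pointwise

open Finset

/-- Additive energy of a finite set of naturals. -/
def addEnergy (A : Finset ℕ) : ℕ :=
  ((A ×ˢ A ×ˢ A ×ˢ A).filter (fun x => x.1 + x.2.1 = x.2.2.1 + x.2.2.2)).card

namespace Chang

/-- Quadruples `(a,b,c,d) ∈ W × X × Y × Z` with `a + b = c + d`. -/
def quad (W X Y Z : Finset ℕ) : Finset (ℕ × ℕ × ℕ × ℕ) :=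
  (W ×ˢ X ×ˢ Y ×ˢ Z).filter (fun q => q.1 + q.2.1 = q.2.2.1 + q.2.2.2)

lemma addEnergy_eq (A : Finset ℕ) : _root_.addEnergy A = (quad A A A A).card := rfl

lemma mem_quad {W X Y Z : Finset ℕ} {a b c d : ℕ} :
    (a, b, c, d) ∈ quad W X Y Z ↔ a ∈ W ∧ b ∈ X ∧ c ∈ Y ∧ d ∈ Z ∧ a + b = c + d := by
  simp [quad, Finset.mem_filter, Finset.mem_product, and_assoc]

/-- number of representations of `s` as a sum from `U × V`. -/
def rp (U V : Finset ℕ) (s : ℕ) : ℕ := ((U ×ˢ V).filter (fun q => q.1 + q.2 = s)).card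

/-- number of pairs `(u,v) ∈ U × V` with `u = v + t`. -/
def dp (U V : Finset ℕ) (t : ℕ) : ℕ := ((U ×ˢ V).filter (fun q => q.1 = q.2 + t)).card

/-- number of pairs `(u,v) ∈ U × V` with `v = u + t`. -/
def dp' (U V : Finset ℕ) (t : ℕ) : ℕ := ((U ×ˢ V).filter (fun q => q.2 = q.1 + t)).card

lemma mem_pairf {U V : Finset ℕ} {p : ℕ → ℕ → Prop} [DecidablePred fun q : ℕ × ℕ => p q.1 q.2]
    {a b : ℕ} : (a, b) ∈ (U ×ˢ V).filter (fun q => p q.1 q.2) ↔ a ∈ U ∧ b ∈ V ∧ p a b := by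
  simp [Finset.mem_filter, Finset.mem_product, and_assoc]

lemma dp'_eq (X : Finset ℕ) (t : ℕ) : dp' X X t = dp X X t := by
  unfold dp dp'
  refine Finset.card_bij' (fun q _ => (q.2, q.1)) (fun q _ => (q.2, q.1)) ?_ ?_ ?_ ?_
  · rintro ⟨a, b⟩ h
    simp only [Finset.mem_filter, Finset.mem_product] at h ⊢
    exact ⟨⟨h.1.2, h.1.1⟩, h.2⟩
  · rintro ⟨a, b⟩ h
    simp only [Finset.mem_filter, Finset.mem_product] at h ⊢
    exact ⟨⟨h.1.2, h.1.1⟩, h.2⟩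
  · rintro ⟨a, b⟩ _; rfl
  · rintro ⟨a, b⟩ _; rfl

/-- index set of possible (truncated) differences -/
def diffs (X : Finset ℕ) : Finset ℕ := (X ×ˢ X).image (fun q => q.1 - q.2)

lemma quad_card_eq (W X Y Z : Finset ℕ) :
    (quad W X Y Z).card = ∑ s ∈ W + X, rp W X s * rp Y Z s := by
  rw [Finset.card_eq_sum_card_fiberwise
    (f := fun q : ℕ × ℕ × ℕ × ℕ => q.1 + q.2.1) (t := W + X)
    (fun q hq => by
      obtain ⟨a, b, c, d⟩ := q
      rw [Finset.mem_coe, mem_quad] at hq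
      exact Finset.mem_add.2 ⟨a, hq.1, b, hq.2.1, rfl⟩)]
  refine Finset.sum_congr rfl fun s _ => ?_
  rw [show rp W X s * rp Y Z s =
    (((W ×ˢ X).filter (fun p => p.1 + p.2 = s)) ×ˢ
     ((Y ×ˢ Z).filter (fun p => p.1 + p.2 = s))).card by rw [Finset.card_product]; rfl]
  refine Finset.card_bij' (fun q _ => ((q.1, q.2.1), (q.2.2.1, q.2.2.2)))
    (fun p _ => (p.1.1, p.1.2, p.2.1, p.2.2)) ?_ ?_ ?_ ?_
  · rintro ⟨a, b, c, d⟩ hq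
    simp only [Finset.mem_filter, mem_quad] at hq
    obtain ⟨⟨h1, h2, h3, h4, h5⟩, h6⟩ := hq
    simp only [Finset.mem_product, Finset.mem_filter, Finset.mem_product]
    exact ⟨⟨⟨h1, h2⟩, h6⟩, ⟨⟨h3, h4⟩, by omega⟩⟩
  · rintro ⟨⟨a, b⟩, c, d⟩ hp
    simp only [Finset.mem_product, Finset.mem_filter] at hp
    obtain ⟨⟨⟨h1, h2⟩, h3⟩, ⟨h4, h5⟩, h6⟩ := hp
    simp only [Finset.mem_filter, mem_quad]
    exact ⟨⟨h1, h2, h4, h5, by omega⟩, h3⟩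
  · rintro ⟨a, b, c, d⟩ _; rfl
  · rintro ⟨⟨a, b⟩, c, d⟩ _; rfl

lemma rp_ne_zero {X : Finset ℕ} {s : ℕ} (h : rp X X s ≠ 0) : s ∈ X + X := by
  rw [rp, Finset.card_ne_zero] at h
  obtain ⟨⟨a, b⟩, hq⟩ := h
  simp only [Finset.mem_filter, Finset.mem_product] at hq
  exact Finset.mem_add.2 ⟨a, hq.1.1, b, hq.1.2, hq.2⟩

lemma dp_ne_zero {X : Finset ℕ} {t : ℕ} (h : dp X X t ≠ 0) : t ∈ diffs X := by
  rw [dp, Finset.card_ne_zero] at h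
  obtain ⟨⟨a, b⟩, hq⟩ := h
  simp only [Finset.mem_filter, Finset.mem_product] at hq
  exact Finset.mem_image.2 ⟨(a, b), Finset.mem_product.2 hq.1, by omega⟩

/-- reduce a sum over an arbitrary index set to one over the support, then bound. -/
lemma sum_le_of_support {f : ℕ → ℕ} {I S : Finset ℕ} (hsupp : ∀ s, f s ≠ 0 → s ∈ S) :
    ∑ s ∈ I, ((f s : ℝ)) ^ 2 ≤ ∑ s ∈ S, ((f s : ℝ)) ^ 2 := by
  calc ∑ s ∈ I, ((f s : ℝ)) ^ 2 = ∑ s ∈ I ∩ S, ((f s : ℝ)) ^ 2 := by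
        refine (Finset.sum_subset Finset.inter_subset_left fun x hx hx' => ?_).symm
        have : f x = 0 := by
          by_contra h
          exact hx' (Finset.mem_inter.2 ⟨hx, hsupp x h⟩)
        simp [this]
    _ ≤ ∑ s ∈ S, ((f s : ℝ)) ^ 2 := by
        refine Finset.sum_le_sum_of_subset_of_nonneg Finset.inter_subset_right
          fun i _ _ => by positivity

lemma sum_rp_sq_le (X : Finset ℕ) (I : Finset ℕ) :
    ∑ s ∈ I, ((rp X X s : ℝ)) ^ 2 ≤ ((quad X X X X).card : ℝ) := by
  calc ∑ s ∈ I, ((rp X X s : ℝ)) ^ 2 ≤ ∑ s ∈ X + X, ((rp X X s : ℝ)) ^ 2 :=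
        sum_le_of_support (fun s h => rp_ne_zero h)
    _ = ((quad X X X X).card : ℝ) := by
        rw [quad_card_eq]; push_cast; refine Finset.sum_congr rfl fun s _ => by ring

def dpairs (X : Finset ℕ) : Finset ((ℕ × ℕ) × ℕ × ℕ) :=
  ((X ×ˢ X) ×ˢ X ×ˢ X).filter (fun q => q.1.1 + q.2.2 = q.1.2 + q.2.1 ∧ q.1.2 ≤ q.1.1)

lemma mem_dpairs {X : Finset ℕ} {a b c d : ℕ} :
    ((a, b), (c, d)) ∈ dpairs X ↔
      a ∈ X ∧ b ∈ X ∧ c ∈ X ∧ d ∈ X ∧ a + d = b + c ∧ b ≤ a := by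
  simp [dpairs, Finset.mem_filter, Finset.mem_product, and_assoc]

lemma sum_dp_sq_le (X : Finset ℕ) (I : Finset ℕ) :
    ∑ t ∈ I, ((dp X X t : ℝ)) ^ 2 ≤ ((quad X X X X).card : ℝ) := by
  have h1 : ∑ t ∈ I, ((dp X X t : ℝ)) ^ 2 ≤ ∑ t ∈ diffs X, ((dp X X t : ℝ)) ^ 2 :=
    sum_le_of_support (fun t h => dp_ne_zero h)
  have h2 : (dpairs X).card = ∑ t ∈ diffs X, dp X X t * dp X X t := by
    rw [Finset.card_eq_sum_card_fiberwise
      (f := fun q : (ℕ × ℕ) × ℕ × ℕ => q.1.1 - q.1.2) (t := diffs X)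
      (fun q hq => by
        obtain ⟨⟨a, b⟩, c, d⟩ := q
        rw [Finset.mem_coe, mem_dpairs] at hq
        exact Finset.mem_image.2 ⟨(a, b), Finset.mem_product.2 ⟨hq.1, hq.2.1⟩, rfl⟩)]
    refine Finset.sum_congr rfl fun t _ => ?_
    rw [show dp X X t * dp X X t =
      (((X ×ˢ X).filter (fun p => p.1 = p.2 + t)) ×ˢ
       ((X ×ˢ X).filter (fun p => p.1 = p.2 + t))).card by rw [Finset.card_product]; rfl]
    refine Finset.card_bij' (fun q _ => (q.1, q.2)) (fun p _ => (p.1, p.2)) ?_ ?_ ?_ ?_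
    · rintro ⟨⟨a, b⟩, c, d⟩ hq
      rw [Finset.mem_filter, mem_dpairs] at hq
      obtain ⟨⟨ha, hb, hc, hd, he, hf⟩, hg⟩ := hq
      have hg' : a - b = t := hg
      simp only [Finset.mem_product, Finset.mem_filter, Finset.mem_product]
      exact ⟨⟨⟨ha, hb⟩, by omega⟩, ⟨⟨hc, hd⟩, by omega⟩⟩
    · rintro ⟨⟨a, b⟩, c, d⟩ hp
      simp only [Finset.mem_product, Finset.mem_filter] at hp
      obtain ⟨⟨⟨ha, hb⟩, hab⟩, ⟨hc, hd⟩, hcd⟩ := hp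
      rw [Finset.mem_filter, mem_dpairs]
      refine ⟨⟨ha, hb, hc, hd, by omega, by omega⟩, ?_⟩
      show a - b = t
      omega
    · rintro ⟨⟨a, b⟩, c, d⟩ _; rfl
    · rintro ⟨⟨a, b⟩, c, d⟩ _; rfl
  have h3 : (dpairs X).card ≤ (quad X X X X).card := by
    refine Finset.card_le_card_of_injOn (fun q => (q.1.1, q.2.2, q.1.2, q.2.1)) ?_ ?_
    · rintro ⟨⟨a, b⟩, c, d⟩ hq
      rw [Finset.mem_coe, mem_dpairs] at hq
      show (a, d, b, c) ∈ quad X X X X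
      rw [mem_quad]
      obtain ⟨ha, hb, hc, hd, he, hf⟩ := hq
      exact ⟨ha, hd, hb, hc, by omega⟩
    · rintro ⟨⟨a, b⟩, c, d⟩ _ ⟨⟨a', b'⟩, c', d'⟩ _ h
      simp only [Prod.mk.injEq] at h
      obtain ⟨h1, h2, h3, h4⟩ := h
      subst h1; subst h2; subst h3; subst h4; rfl
  refine h1.trans ?_
  calc ∑ t ∈ diffs X, ((dp X X t : ℝ)) ^ 2
      = ((∑ t ∈ diffs X, dp X X t * dp X X t : ℕ) : ℝ) := by
        push_cast; refine Finset.sum_congr rfl fun s _ => by ring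
    _ ≤ ((quad X X X X).card : ℝ) := by rw [← h2]; exact_mod_cast h3

/-- Cauchy-Schwarz packaging -/
lemma cs_helper {I : Finset ℕ} (f g : ℕ → ℕ) {EX EY : ℝ}
    (hX : ∑ i ∈ I, ((f i : ℝ)) ^ 2 ≤ EX) (hY : ∑ i ∈ I, ((g i : ℝ)) ^ 2 ≤ EY) :
    ((∑ i ∈ I, f i * g i : ℕ) : ℝ) ≤ Real.sqrt EX * Real.sqrt EY := by
  have hEX : (0:ℝ) ≤ EX := le_trans (by positivity) hX
  have hEY : (0:ℝ) ≤ EY := le_trans (by positivity) hY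
  have ht : (0:ℝ) ≤ ((∑ i ∈ I, f i * g i : ℕ) : ℝ) := by positivity
  rw [← Real.sqrt_mul hEX, Real.le_sqrt ht (by positivity)]
  calc ((∑ i ∈ I, f i * g i : ℕ) : ℝ) ^ 2 = (∑ i ∈ I, (f i : ℝ) * (g i : ℝ)) ^ 2 := by
        push_cast; rfl
    _ ≤ (∑ i ∈ I, ((f i : ℝ)) ^ 2) * (∑ i ∈ I, ((g i : ℝ)) ^ 2) :=
        Finset.sum_mul_sq_le_sq_mul_sq _ _ _
    _ ≤ EX * EY := mul_le_mul hX hY (by positivity) hEX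


/-- energy as a real number -/
noncomputable def en (X : Finset ℕ) : ℝ := ((quad X X X X).card : ℝ)

lemma en_nonneg (X : Finset ℕ) : 0 ≤ en X := by unfold en; positivity

lemma shape1 (X Y : Finset ℕ) :
    ((quad X X Y Y).card : ℝ) ≤ Real.sqrt (en X) * Real.sqrt (en Y) := by
  rw [quad_card_eq]
  exact cs_helper (rp X X) (rp Y Y) (sum_rp_sq_le X (X + X)) (sum_rp_sq_le Y (X + X))



lemma shape2 (X Y : Finset ℕ) :
    ((quad X Y X Y).card : ℝ) ≤ 2 * (Real.sqrt (en X) * Real.sqrt (en Y)) := by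
  classical
  have hsplit : (quad X Y X Y).card =
      ((quad X Y X Y).filter (fun q => q.2.2.1 ≤ q.1)).card +
      ((quad X Y X Y).filter (fun q => ¬ q.2.2.1 ≤ q.1)).card :=
    (Finset.card_filter_add_card_filter_not _).symm
  have hplus : (((quad X Y X Y).filter (fun q => q.2.2.1 ≤ q.1)).card : ℝ) ≤
      Real.sqrt (en X) * Real.sqrt (en Y) := by
    have hcard : ((quad X Y X Y).filter (fun q => q.2.2.1 ≤ q.1)).card ≤
        ∑ t ∈ diffs X, dp X X t * dp' Y Y t := by
      rw [Finset.card_eq_sum_card_fiberwise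
        (f := fun q : ℕ × ℕ × ℕ × ℕ => q.1 - q.2.2.1) (t := diffs X)
        (fun q hq => by
          obtain ⟨a, b, c, d⟩ := q
          rw [Finset.mem_coe, Finset.mem_filter, mem_quad] at hq
          exact Finset.mem_image.2 ⟨(a, c), Finset.mem_product.2 ⟨hq.1.1, hq.1.2.2.1⟩, rfl⟩)]
      refine Finset.sum_le_sum fun t _ => ?_
      rw [show dp X X t * dp' Y Y t =
        (((X ×ˢ X).filter (fun p => p.1 = p.2 + t)) ×ˢ
         ((Y ×ˢ Y).filter (fun p => p.2 = p.1 + t))).card by rw [Finset.card_product]; rfl]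
      refine Finset.card_le_card_of_injOn (fun q => ((q.1, q.2.2.1), (q.2.1, q.2.2.2))) ?_ ?_
      · rintro ⟨a, b, c, d⟩ hq
        simp only [Finset.mem_coe, Finset.mem_filter, mem_quad] at hq
        obtain ⟨⟨⟨ha, hb, hc, hd, he⟩, hf⟩, hg⟩ := hq
        have hg' : a - c = t := hg
        simp only [Finset.mem_coe, Finset.mem_product, Finset.mem_filter]
        exact ⟨⟨⟨ha, hc⟩, by omega⟩, ⟨⟨hb, hd⟩, by omega⟩⟩
      · rintro ⟨a, b, c, d⟩ _ ⟨a', b', c', d'⟩ _ h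
        simp only [Prod.mk.injEq] at h
        obtain ⟨⟨h1, h2⟩, h3, h4⟩ := h
        subst h1; subst h2; subst h3; subst h4; rfl
    calc (((quad X Y X Y).filter (fun q => q.2.2.1 ≤ q.1)).card : ℝ)
        ≤ ((∑ t ∈ diffs X, dp X X t * dp' Y Y t : ℕ) : ℝ) := by exact_mod_cast hcard
      _ = ((∑ t ∈ diffs X, dp X X t * dp Y Y t : ℕ) : ℝ) := by
          congr 1
          exact Finset.sum_congr rfl fun t _ => by rw [dp'_eq]
      _ ≤ Real.sqrt (en X) * Real.sqrt (en Y) :=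
          cs_helper (dp X X) (dp Y Y) (sum_dp_sq_le X _) (sum_dp_sq_le Y _)
  have hminus : (((quad X Y X Y).filter (fun q => ¬ q.2.2.1 ≤ q.1)).card : ℝ) ≤
      Real.sqrt (en X) * Real.sqrt (en Y) := by
    have hcard : ((quad X Y X Y).filter (fun q => ¬ q.2.2.1 ≤ q.1)).card ≤
        ∑ t ∈ diffs X, dp' X X t * dp Y Y t := by
      rw [Finset.card_eq_sum_card_fiberwise
        (f := fun q : ℕ × ℕ × ℕ × ℕ => q.2.2.1 - q.1) (t := diffs X)
        (fun q hq => by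
          obtain ⟨a, b, c, d⟩ := q
          rw [Finset.mem_coe, Finset.mem_filter, mem_quad] at hq
          exact Finset.mem_image.2 ⟨(c, a), Finset.mem_product.2 ⟨hq.1.2.2.1, hq.1.1⟩, rfl⟩)]
      refine Finset.sum_le_sum fun t _ => ?_
      rw [show dp' X X t * dp Y Y t =
        (((X ×ˢ X).filter (fun p => p.2 = p.1 + t)) ×ˢ
         ((Y ×ˢ Y).filter (fun p => p.1 = p.2 + t))).card by rw [Finset.card_product]; rfl]
      refine Finset.card_le_card_of_injOn (fun q => ((q.1, q.2.2.1), (q.2.1, q.2.2.2))) ?_ ?_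
      · rintro ⟨a, b, c, d⟩ hq
        simp only [Finset.mem_coe, Finset.mem_filter, mem_quad] at hq
        obtain ⟨⟨⟨ha, hb, hc, hd, he⟩, hf⟩, hg⟩ := hq
        have hg' : c - a = t := hg
        simp only [Finset.mem_coe, Finset.mem_product, Finset.mem_filter]
        exact ⟨⟨⟨ha, hc⟩, by omega⟩, ⟨⟨hb, hd⟩, by omega⟩⟩
      · rintro ⟨a, b, c, d⟩ _ ⟨a', b', c', d'⟩ _ h
        simp only [Prod.mk.injEq] at h
        obtain ⟨⟨h1, h2⟩, h3, h4⟩ := h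
        subst h1; subst h2; subst h3; subst h4; rfl
    calc (((quad X Y X Y).filter (fun q => ¬ q.2.2.1 ≤ q.1)).card : ℝ)
        ≤ ((∑ t ∈ diffs X, dp' X X t * dp Y Y t : ℕ) : ℝ) := by exact_mod_cast hcard
      _ = ((∑ t ∈ diffs X, dp X X t * dp Y Y t : ℕ) : ℝ) := by
          congr 1
          exact Finset.sum_congr rfl fun t _ => by rw [dp'_eq]
      _ ≤ Real.sqrt (en X) * Real.sqrt (en Y) :=
          cs_helper (dp X X) (dp Y Y) (sum_dp_sq_le X _) (sum_dp_sq_le Y _)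
  calc ((quad X Y X Y).card : ℝ)
      = (((quad X Y X Y).filter (fun q => q.2.2.1 ≤ q.1)).card : ℝ) +
        (((quad X Y X Y).filter (fun q => ¬ q.2.2.1 ≤ q.1)).card : ℝ) := by
        rw [hsplit]; push_cast; ring
    _ ≤ 2 * (Real.sqrt (en X) * Real.sqrt (en Y)) := by
        rw [two_mul]; exact add_le_add hplus hminus

lemma shape3 (X Y : Finset ℕ) :
    ((quad X Y Y X).card : ℝ) ≤ 2 * (Real.sqrt (en X) * Real.sqrt (en Y)) := by
  classical
  have hsplit : (quad X Y Y X).card =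
      ((quad X Y Y X).filter (fun q => q.2.2.2 ≤ q.1)).card +
      ((quad X Y Y X).filter (fun q => ¬ q.2.2.2 ≤ q.1)).card :=
    (Finset.card_filter_add_card_filter_not _).symm
  have hplus : (((quad X Y Y X).filter (fun q => q.2.2.2 ≤ q.1)).card : ℝ) ≤
      Real.sqrt (en X) * Real.sqrt (en Y) := by
    have hcard : ((quad X Y Y X).filter (fun q => q.2.2.2 ≤ q.1)).card ≤
        ∑ t ∈ diffs X, dp X X t * dp' Y Y t := by
      rw [Finset.card_eq_sum_card_fiberwise
        (f := fun q : ℕ × ℕ × ℕ × ℕ => q.1 - q.2.2.2) (t := diffs X)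
        (fun q hq => by
          obtain ⟨a, b, c, d⟩ := q
          rw [Finset.mem_coe, Finset.mem_filter, mem_quad] at hq
          exact Finset.mem_image.2 ⟨(a, d), Finset.mem_product.2 ⟨hq.1.1, hq.1.2.2.2.1⟩, rfl⟩)]
      refine Finset.sum_le_sum fun t _ => ?_
      rw [show dp X X t * dp' Y Y t =
        (((X ×ˢ X).filter (fun p => p.1 = p.2 + t)) ×ˢ
         ((Y ×ˢ Y).filter (fun p => p.2 = p.1 + t))).card by rw [Finset.card_product]; rfl]
      refine Finset.card_le_card_of_injOn (fun q => ((q.1, q.2.2.2), (q.2.1, q.2.2.1))) ?_ ?_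
      · rintro ⟨a, b, c, d⟩ hq
        simp only [Finset.mem_coe, Finset.mem_filter, mem_quad] at hq
        obtain ⟨⟨⟨ha, hb, hc, hd, he⟩, hf⟩, hg⟩ := hq
        have hg' : a - d = t := hg
        simp only [Finset.mem_coe, Finset.mem_product, Finset.mem_filter]
        exact ⟨⟨⟨ha, hd⟩, by omega⟩, ⟨⟨hb, hc⟩, by omega⟩⟩
      · rintro ⟨a, b, c, d⟩ _ ⟨a', b', c', d'⟩ _ h
        simp only [Prod.mk.injEq] at h
        obtain ⟨⟨h1, h2⟩, h3, h4⟩ := h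
        subst h1; subst h2; subst h3; subst h4; rfl
    calc (((quad X Y Y X).filter (fun q => q.2.2.2 ≤ q.1)).card : ℝ)
        ≤ ((∑ t ∈ diffs X, dp X X t * dp' Y Y t : ℕ) : ℝ) := by exact_mod_cast hcard
      _ = ((∑ t ∈ diffs X, dp X X t * dp Y Y t : ℕ) : ℝ) := by
          congr 1
          exact Finset.sum_congr rfl fun t _ => by rw [dp'_eq]
      _ ≤ Real.sqrt (en X) * Real.sqrt (en Y) :=
          cs_helper (dp X X) (dp Y Y) (sum_dp_sq_le X _) (sum_dp_sq_le Y _)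
  have hminus : (((quad X Y Y X).filter (fun q => ¬ q.2.2.2 ≤ q.1)).card : ℝ) ≤
      Real.sqrt (en X) * Real.sqrt (en Y) := by
    have hcard : ((quad X Y Y X).filter (fun q => ¬ q.2.2.2 ≤ q.1)).card ≤
        ∑ t ∈ diffs X, dp' X X t * dp Y Y t := by
      rw [Finset.card_eq_sum_card_fiberwise
        (f := fun q : ℕ × ℕ × ℕ × ℕ => q.2.2.2 - q.1) (t := diffs X)
        (fun q hq => by
          obtain ⟨a, b, c, d⟩ := q
          rw [Finset.mem_coe, Finset.mem_filter, mem_quad] at hq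
          exact Finset.mem_image.2 ⟨(d, a), Finset.mem_product.2 ⟨hq.1.2.2.2.1, hq.1.1⟩, rfl⟩)]
      refine Finset.sum_le_sum fun t _ => ?_
      rw [show dp' X X t * dp Y Y t =
        (((X ×ˢ X).filter (fun p => p.2 = p.1 + t)) ×ˢ
         ((Y ×ˢ Y).filter (fun p => p.1 = p.2 + t))).card by rw [Finset.card_product]; rfl]
      refine Finset.card_le_card_of_injOn (fun q => ((q.1, q.2.2.2), (q.2.1, q.2.2.1))) ?_ ?_
      · rintro ⟨a, b, c, d⟩ hq
        simp only [Finset.mem_coe, Finset.mem_filter, mem_quad] at hq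
        obtain ⟨⟨⟨ha, hb, hc, hd, he⟩, hf⟩, hg⟩ := hq
        have hg' : d - a = t := hg
        simp only [Finset.mem_coe, Finset.mem_product, Finset.mem_filter]
        exact ⟨⟨⟨ha, hd⟩, by omega⟩, ⟨⟨hb, hc⟩, by omega⟩⟩
      · rintro ⟨a, b, c, d⟩ _ ⟨a', b', c', d'⟩ _ h
        simp only [Prod.mk.injEq] at h
        obtain ⟨⟨h1, h2⟩, h3, h4⟩ := h
        subst h1; subst h2; subst h3; subst h4; rfl
    calc (((quad X Y Y X).filter (fun q => ¬ q.2.2.2 ≤ q.1)).card : ℝ)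
        ≤ ((∑ t ∈ diffs X, dp' X X t * dp Y Y t : ℕ) : ℝ) := by exact_mod_cast hcard
      _ = ((∑ t ∈ diffs X, dp X X t * dp Y Y t : ℕ) : ℝ) := by
          congr 1
          exact Finset.sum_congr rfl fun t _ => by rw [dp'_eq]
      _ ≤ Real.sqrt (en X) * Real.sqrt (en Y) :=
          cs_helper (dp X X) (dp Y Y) (sum_dp_sq_le X _) (sum_dp_sq_le Y _)
  calc ((quad X Y Y X).card : ℝ)
      = (((quad X Y Y X).filter (fun q => q.2.2.2 ≤ q.1)).card : ℝ) +
        (((quad X Y Y X).filter (fun q => ¬ q.2.2.2 ≤ q.1)).card : ℝ) := by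
        rw [hsplit]; push_cast; ring
    _ ≤ 2 * (Real.sqrt (en X) * Real.sqrt (en Y)) := by
        rw [two_mul]; exact add_le_add hplus hminus


lemma en_master {A : Finset ℕ} (v : ℕ → ℕ)
    (hmin : ∀ a b c d, a ∈ A → b ∈ A → c ∈ A → d ∈ A → a + b = c + d →
      v a = v b ∨ v a = v c ∨ v a = v d ∨ v b = v c ∨ v b = v d ∨ v c = v d) :
    en A ≤ 10 * (∑ m ∈ A.image v, Real.sqrt (en (A.filter (fun x => v x = m)))) *
      Real.sqrt (en A) := by
  classical
  set Af : ℕ → Finset ℕ := fun m => A.filter (fun x => v x = m) with hAf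
  set U : ℕ → Finset (ℕ × ℕ × ℕ × ℕ) := fun m =>
    quad (Af m) (Af m) A A ∪ quad A A (Af m) (Af m) ∪ quad (Af m) A (Af m) A ∪
    quad A (Af m) A (Af m) ∪ quad (Af m) A A (Af m) ∪ quad A (Af m) (Af m) A with hU
  have hAfm : ∀ x, x ∈ A → x ∈ Af (v x) := fun x hx => Finset.mem_filter.2 ⟨hx, rfl⟩
  have hsub : quad A A A A ⊆ (A.image v).biUnion U := by
    rintro ⟨a, b, c, d⟩ hq
    rw [mem_quad] at hq
    obtain ⟨ha, hb, hc, hd, he⟩ := hq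
    rcases hmin a b c d ha hb hc hd he with h | h | h | h | h | h
    · refine Finset.mem_biUnion.2 ⟨v a, Finset.mem_image_of_mem v ha, ?_⟩
      simp only [hU, Finset.mem_union]
      exact Or.inl <| Or.inl <| Or.inl <| Or.inl <| Or.inl <|
        mem_quad.2 ⟨hAfm a ha, h ▸ hAfm b hb, hc, hd, he⟩
    · refine Finset.mem_biUnion.2 ⟨v a, Finset.mem_image_of_mem v ha, ?_⟩
      simp only [hU, Finset.mem_union]
      exact Or.inl <| Or.inl <| Or.inl <| Or.inr <|
        mem_quad.2 ⟨hAfm a ha, hb, h ▸ hAfm c hc, hd, he⟩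
    · refine Finset.mem_biUnion.2 ⟨v a, Finset.mem_image_of_mem v ha, ?_⟩
      simp only [hU, Finset.mem_union]
      exact Or.inl <| Or.inr <|
        mem_quad.2 ⟨hAfm a ha, hb, hc, h ▸ hAfm d hd, he⟩
    · refine Finset.mem_biUnion.2 ⟨v b, Finset.mem_image_of_mem v hb, ?_⟩
      simp only [hU, Finset.mem_union]
      exact Or.inr <|
        mem_quad.2 ⟨ha, hAfm b hb, h ▸ hAfm c hc, hd, he⟩
    · refine Finset.mem_biUnion.2 ⟨v b, Finset.mem_image_of_mem v hb, ?_⟩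
      simp only [hU, Finset.mem_union]
      exact Or.inl <| Or.inl <| Or.inr <|
        mem_quad.2 ⟨ha, hAfm b hb, hc, h ▸ hAfm d hd, he⟩
    · refine Finset.mem_biUnion.2 ⟨v c, Finset.mem_image_of_mem v hc, ?_⟩
      simp only [hU, Finset.mem_union]
      exact Or.inl <| Or.inl <| Or.inl <| Or.inl <| Or.inr <|
        mem_quad.2 ⟨ha, hb, hAfm c hc, h ▸ hAfm d hd, he⟩
  have hcard : (quad A A A A).card ≤ ∑ m ∈ A.image v, (U m).card :=
    le_trans (Finset.card_le_card hsub) (Finset.card_biUnion_le)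
  have hUm : ∀ m, ((U m).card : ℝ) ≤
      10 * (Real.sqrt (en (Af m)) * Real.sqrt (en A)) := by
    intro m
    have hchain : (U m).card ≤
        (quad (Af m) (Af m) A A).card + (quad A A (Af m) (Af m)).card +
        (quad (Af m) A (Af m) A).card + (quad A (Af m) A (Af m)).card +
        (quad (Af m) A A (Af m)).card + (quad A (Af m) (Af m) A).card := by
      simp only [hU]
      refine le_trans (Finset.card_union_le _ _) (Nat.add_le_add_right ?_ _)
      refine le_trans (Finset.card_union_le _ _) (Nat.add_le_add_right ?_ _)
      refine le_trans (Finset.card_union_le _ _) (Nat.add_le_add_right ?_ _)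
      refine le_trans (Finset.card_union_le _ _) (Nat.add_le_add_right ?_ _)
      exact Finset.card_union_le _ _
    have h1 := shape1 (Af m) A
    have h2 := shape1 A (Af m)
    have h3 := shape2 (Af m) A
    have h4 := shape2 A (Af m)
    have h5 := shape3 (Af m) A
    have h6 := shape3 A (Af m)
    rw [mul_comm (Real.sqrt (en A))] at h2 h4 h6
    have hc' : ((U m).card : ℝ) ≤
        ((quad (Af m) (Af m) A A).card : ℝ) + ((quad A A (Af m) (Af m)).card : ℝ) +
        ((quad (Af m) A (Af m) A).card : ℝ) + ((quad A (Af m) A (Af m)).card : ℝ) +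
        ((quad (Af m) A A (Af m)).card : ℝ) + ((quad A (Af m) (Af m) A).card : ℝ) := by
      exact_mod_cast hchain
    linarith
  have hstep : en A ≤ ∑ m ∈ A.image v, ((U m).card : ℝ) := by
    rw [en]
    calc ((quad A A A A).card : ℝ) ≤ ((∑ m ∈ A.image v, (U m).card : ℕ) : ℝ) := by
          exact_mod_cast hcard
      _ = ∑ m ∈ A.image v, ((U m).card : ℝ) := by push_cast; rfl
  calc en A ≤ ∑ m ∈ A.image v, ((U m).card : ℝ) := hstep
    _ ≤ ∑ m ∈ A.image v, 10 * (Real.sqrt (en (Af m)) * Real.sqrt (en A)) :=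
        Finset.sum_le_sum fun m _ => hUm m
    _ = ∑ m ∈ A.image v, (10 * Real.sqrt (en (Af m))) * Real.sqrt (en A) := by
        refine Finset.sum_congr rfl fun m _ => by ring
    _ = (∑ m ∈ A.image v, 10 * Real.sqrt (en (Af m))) * Real.sqrt (en A) :=
        (Finset.sum_mul _ _ _).symm
    _ = 10 * (∑ m ∈ A.image v, Real.sqrt (en (Af m))) * Real.sqrt (en A) := by
        rw [Finset.mul_sum]


/-! ## Rank machinery and Freiman's dimension lemma -/

section Rank

variable {V : Type*} [DecidableEq V] [AddCommGroup V] [Module ℚ V]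

open Submodule Module

/-- The "dimension" of a finite set: rank of the span of its difference set. -/
noncomputable def rk (s : Finset V) : ℕ :=
  Module.finrank ℚ (Submodule.span ℚ ((s : Set V) - (s : Set V)))

lemma fd_span_diff (s : Finset V) :
    FiniteDimensional ℚ (Submodule.span ℚ ((s : Set V) - (s : Set V))) :=
  FiniteDimensional.span_of_finite ℚ ((s.finite_toSet).sub (s.finite_toSet))

lemma diff_mem_span {s : Finset V} {a b : V} (ha : a ∈ s) (hb : b ∈ s) :
    a - b ∈ Submodule.span ℚ ((s : Set V) - (s : Set V)) :=
  Submodule.subset_span ⟨a, ha, b, hb, rfl⟩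

lemma span_diff_eq {s : Finset V} {v : V} (hv : v ∈ s) :
    Submodule.span ℚ ((s : Set V) - (s : Set V)) =
      Submodule.span ℚ ((fun a => a - v) '' (s : Set V)) := by
  apply le_antisymm
  · rw [Submodule.span_le]
    rintro x ⟨a, ha, b, hb, rfl⟩
    have hmem : a - b ∈ Submodule.span ℚ ((fun a => a - v) '' (s : Set V)) := by
      rw [(by abel : a - b = (a - v) - (b - v))]
      exact sub_mem (Submodule.subset_span ⟨a, ha, rfl⟩) (Submodule.subset_span ⟨b, hb, rfl⟩)
    exact hmem
  · rw [Submodule.span_le]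
    rintro x ⟨a, ha, rfl⟩
    exact Submodule.subset_span ⟨a, ha, v, hv, rfl⟩

lemma rk_mono {s t : Finset V} (h : s ⊆ t) : rk s ≤ rk t := by
  have := fd_span_diff t
  exact Submodule.finrank_mono (Submodule.span_mono
    (Set.sub_subset_sub (Finset.coe_subset.2 h) (Finset.coe_subset.2 h)))

lemma rk_add_one_le_card {s : Finset V} (hs : s.Nonempty) : rk s + 1 ≤ s.card := by
  obtain ⟨v, hv⟩ := hs
  have h1 : rk s ≤ (s.erase v).card := by
    rw [rk, span_diff_eq hv]
    have himg : ((fun a => a - v) '' (s : Set V)) ⊆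
        insert 0 ((fun a => a - v) '' ((s.erase v : Finset V) : Set V)) := by
      rintro x ⟨a, ha, rfl⟩
      by_cases hav : a = v
      · subst hav; left; simp
      · right; exact ⟨a, Finset.mem_coe.2 (Finset.mem_erase.2 ⟨hav, ha⟩), rfl⟩
    have h2 : Submodule.span ℚ ((fun a => a - v) '' (s : Set V)) ≤
        Submodule.span ℚ ((fun a => a - v) '' ((s.erase v : Finset V) : Set V)) := by
      refine le_trans (Submodule.span_mono himg) ?_
      rw [Submodule.span_insert_zero]
    have hfd : FiniteDimensional ℚ
        (Submodule.span ℚ ((fun a => a - v) '' ((s.erase v : Finset V) : Set V))) :=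
      FiniteDimensional.span_of_finite ℚ ((s.erase v).finite_toSet.image _)
    refine le_trans (Submodule.finrank_mono h2) ?_
    rw [show ((fun a => a - v) '' ((s.erase v : Finset V) : Set V)) =
        (((s.erase v).image (fun a => a - v) : Finset V) : Set V) by
      rw [Finset.coe_image]]
    exact le_trans (finrank_span_finset_le_card _) (Finset.card_image_le)
  have h3 : (s.erase v).card + 1 = s.card := Finset.card_erase_add_one hv
  omega

end Rank

section Freiman

variable {V : Type*} [DecidableEq V] [AddCommGroup V] [Module ℚ V] [LinearOrder V]
  [AddLeftStrictMono V] [AddRightStrictMono V]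

open Submodule Module

private lemma four_eq_sub {a b c v : V} (h : b + c = v + a) :
    a - v = (b - v) + (c - v) := by
  have h2 : (b - v) + (c - v) - (a - v) = (b + c) - (v + a) := by abel
  rw [h, sub_self] at h2
  exact (sub_eq_zero.mp h2).symm

theorem freiman_aux : ∀ (n : ℕ) (s : Finset V), s.card ≤ n → s.Nonempty →
    2 * ((rk s + 1) * s.card) ≤ 2 * (s + s).card + rk s * (rk s + 1) := by
  intro n
  induction n with
  | zero => intro s hcard hne; simp [Finset.card_eq_zero.1 (Nat.le_zero.1 hcard)] at hne ⊢
  | succ n IH =>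
    intro s hcard hne
    classical
    obtain ⟨v, hvs, hvmax⟩ : ∃ v ∈ s, ∀ a ∈ s, a ≤ v :=
      ⟨s.max' hne, s.max'_mem hne, fun a ha => s.le_max' a ha⟩
    set s' := s.erase v with hs'def
    have hcard' : s'.card + 1 = s.card := Finset.card_erase_add_one hvs
    by_cases hs' : s'.Nonempty
    swap
    · -- s = {v}
      have hsv : s = {v} := by
        rcases (Finset.erase_eq_empty_iff s v).1 (Finset.not_nonempty_iff_eq_empty.1 hs') with
          h | h
        · exact absurd h (Finset.nonempty_iff_ne_empty.1 hne)
        · exact h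
      subst hsv
      have hrk : rk ({v} : Finset V) = 0 := by
        rw [rk]
        have : (({v} : Finset V) : Set V) - (({v} : Finset V) : Set V) = {0} := by
          rw [Finset.coe_singleton, Set.singleton_sub_singleton, sub_self]
        rw [this, Submodule.span_zero_singleton]
        exact finrank_bot ℚ V
      rw [hrk, Finset.singleton_add_singleton]
      simp
    · obtain ⟨u, hu⟩ := hs'
      have hus : u ∈ s := (Finset.erase_subset v s) hu
      have hlt : ∀ a ∈ s', a < v := fun a ha =>
        lt_of_le_of_ne (hvmax a ((Finset.erase_subset v s) ha))
          (Finset.mem_erase.1 ha).1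
      have hcard'' : s'.card ≤ n := by omega
      have hIH := IH s' (by omega) ⟨u, hu⟩
      by_cases hcase : v - u ∈ Submodule.span ℚ ((s' : Set V) - (s' : Set V))
      · -- Case 1 : dimension does not drop
        have heq : Submodule.span ℚ ((fun a => a - u) '' (s : Set V)) =
            Submodule.span ℚ ((fun a => a - u) '' (s' : Set V)) := by
          apply le_antisymm
          · rw [Submodule.span_le]
            rintro x ⟨a, ha, rfl⟩
            have hmem : a - u ∈ Submodule.span ℚ ((fun a => a - u) '' (s' : Set V)) := by
              by_cases hav : a = v
              · subst hav
                rw [← span_diff_eq hu]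
                exact hcase
              · exact Submodule.subset_span
                  ⟨a, Finset.mem_coe.2 (Finset.mem_erase.2 ⟨hav, ha⟩), rfl⟩
            exact hmem
          · exact Submodule.span_mono
              (Set.image_mono (Finset.coe_subset.2 (Finset.erase_subset v s)))
        have hrk_eq : rk s = rk s' := by
          rw [rk, rk, span_diff_eq hus, span_diff_eq hu, heq]
        -- the good (atomic) elements
        set G := s'.filter (fun a => v + a ∉ s' + s') with hG
        have hGs' : G ⊆ s' := Finset.filter_subset _ _
        -- every element of s' − v lies in the span of G − v
        have key : ∀ k : ℕ, ∀ a ∈ s', (s'.filter (fun y => a < y)).card ≤ k →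
            a - v ∈ Submodule.span ℚ ((fun g => g - v) '' (G : Set V)) := by
          intro k
          induction k with
          | zero =>
            intro a ha h0
            by_cases haG : v + a ∈ s' + s'
            · obtain ⟨b, hb, cc, hc, hbc⟩ := Finset.mem_add.1 haG
              have hab : a < b := by
                have h1 : b + cc < b + v := add_lt_add_right (hlt cc hc) b
                rw [hbc, add_comm b v] at h1
                exact lt_of_add_lt_add_left h1
              have : b ∈ s'.filter (fun y => a < y) := Finset.mem_filter.2 ⟨hb, hab⟩
              rw [Finset.card_eq_zero.1 (Nat.le_zero.1 h0)] at this
              simp at this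
            · exact Submodule.subset_span ⟨a, Finset.mem_coe.2
                (Finset.mem_filter.2 ⟨ha, haG⟩), rfl⟩
          | succ k IHk =>
            intro a ha hk
            by_cases haG : v + a ∈ s' + s'
            · obtain ⟨b, hb, cc, hc, hbc⟩ := Finset.mem_add.1 haG
              have hab : a < b := by
                have h1 : b + cc < b + v := add_lt_add_right (hlt cc hc) b
                rw [hbc, add_comm b v] at h1
                exact lt_of_add_lt_add_left h1
              have hac : a < cc := by
                have h1 : b + cc < v + cc := add_lt_add_left (hlt b hb) cc
                rw [hbc] at h1
                exact lt_of_add_lt_add_left h1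
              have hmono : ∀ x ∈ s', a < x → (s'.filter (fun y => x < y)).card ≤ k := by
                intro x hx hax
                have hss : s'.filter (fun y => x < y) ⊂ s'.filter (fun y => a < y) := by
                  constructor
                  · intro y hy
                    rw [Finset.mem_filter] at hy ⊢
                    exact ⟨hy.1, lt_trans hax hy.2⟩
                  · intro hcont
                    have hx1 : x ∈ s'.filter (fun y => a < y) := Finset.mem_filter.2 ⟨hx, hax⟩
                    have hx2 := hcont hx1
                    rw [Finset.mem_filter] at hx2
                    exact absurd hx2.2 (lt_irrefl x)
                have := Finset.card_lt_card hss
                omega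
              have hrep : a - v = (b - v) + (cc - v) := four_eq_sub hbc
              rw [hrep]
              exact add_mem (IHk b hb (hmono b hb hab)) (IHk cc hc (hmono cc hc hac))
            · exact Submodule.subset_span ⟨a, Finset.mem_coe.2
                (Finset.mem_filter.2 ⟨ha, haG⟩), rfl⟩
        -- rank is at most |G|
        have hrkG : rk s ≤ G.card := by
          have hspan : Submodule.span ℚ ((fun a => a - v) '' (s : Set V)) ≤
              Submodule.span ℚ ((fun g => g - v) '' (G : Set V)) := by
            rw [Submodule.span_le]
            rintro x ⟨a, ha, rfl⟩
            by_cases hav : a = v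
            · subst hav; simp
            · exact key _ a (Finset.mem_erase.2 ⟨hav, ha⟩) le_rfl
          have hfd : FiniteDimensional ℚ
              (Submodule.span ℚ ((fun g => g - v) '' (G : Set V))) :=
            FiniteDimensional.span_of_finite ℚ (G.finite_toSet.image _)
          rw [rk, span_diff_eq hvs]
          refine le_trans (Submodule.finrank_mono hspan) ?_
          rw [show ((fun g => g - v) '' (G : Set V)) =
              ((G.image (fun g => g - v) : Finset V) : Set V) by rw [Finset.coe_image]]
          exact le_trans (finrank_span_finset_le_card _) Finset.card_image_le
        -- new sums
        have hnew : (s' + s').card + (G.card + 1) ≤ (s + s).card := by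
          have hsub1 : (s' + s') ∪ insert (v + v) (G.image (fun g => v + g)) ⊆ s + s := by
            intro x hx
            rcases Finset.mem_union.1 hx with hx | hx
            · obtain ⟨a, ha, b, hb, hab⟩ := Finset.mem_add.1 hx
              exact Finset.mem_add.2 ⟨a, (Finset.erase_subset v s) ha, b,
                (Finset.erase_subset v s) hb, hab⟩
            · rcases Finset.mem_insert.1 hx with hx | hx
              · exact hx ▸ Finset.mem_add.2 ⟨v, hvs, v, hvs, rfl⟩
              · obtain ⟨g, hg, rfl⟩ := Finset.mem_image.1 hx
                exact Finset.mem_add.2 ⟨v, hvs, g, (Finset.erase_subset v s) (hGs' hg), rfl⟩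
          have hdisj : Disjoint (s' + s') (insert (v + v) (G.image (fun g => v + g))) := by
            rw [Finset.disjoint_right]
            intro x hx
            rcases Finset.mem_insert.1 hx with hx | hx
            · subst hx
              intro hcont
              obtain ⟨b, hb, c, hc, hbc⟩ := Finset.mem_add.1 hcont
              have : b + c < v + v := add_lt_add (hlt b hb) (hlt c hc)
              rw [hbc] at this
              exact lt_irrefl _ this
            · obtain ⟨g, hg, rfl⟩ := Finset.mem_image.1 hx
              exact (Finset.mem_filter.1 hg).2
          have hcardins : (insert (v + v) (G.image (fun g => v + g))).card = G.card + 1 := by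
            rw [Finset.card_insert_of_notMem, Finset.card_image_of_injective _
              (add_right_injective v)]
            intro hcont
            obtain ⟨g, hg, hgv⟩ := Finset.mem_image.1 hcont
            have : g = v := by
              have := add_left_cancel hgv
              exact this
            subst this
            exact (Finset.mem_erase.1 (hGs' hg)).1 rfl
          calc (s' + s').card + (G.card + 1)
              = ((s' + s') ∪ insert (v + v) (G.image (fun g => v + g))).card := by
                rw [Finset.card_union_of_disjoint hdisj, hcardins]
            _ ≤ (s + s).card := Finset.card_le_card hsub1
        have hfinal : (s' + s').card + (rk s + 1) ≤ (s + s).card := by omega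
        rw [hrk_eq] at *
        nlinarith [hIH, hfinal, hcard']
      · -- Case 2 : dimension drops by exactly one
        have hWle : Submodule.span ℚ ((s' : Set V) - (s' : Set V)) ≤
            Submodule.span ℚ ((s : Set V) - (s : Set V)) :=
          Submodule.span_mono (Set.sub_subset_sub (Finset.coe_subset.2 (Finset.erase_subset v s))
            (Finset.coe_subset.2 (Finset.erase_subset v s)))
        have hfd := fd_span_diff s
        have hlt1 : rk s' < rk s := by
          have hne2 : Submodule.span ℚ ((s' : Set V) - (s' : Set V)) <
              Submodule.span ℚ ((s : Set V) - (s : Set V)) := by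
            refine lt_of_le_of_ne hWle ?_
            intro hcont
            exact hcase (hcont ▸ diff_mem_span hvs hus)
          exact Submodule.finrank_lt_finrank_of_lt hne2
        have hle1 : rk s ≤ rk s' + 1 := by
          unfold rk
          have hsp : Submodule.span ℚ ((s : Set V) - (s : Set V)) ≤
              Submodule.span ℚ ((s' : Set V) - (s' : Set V)) ⊔
                Submodule.span ℚ {v - u} := by
            rw [span_diff_eq hus, Submodule.span_le]
            rintro x ⟨a, ha, rfl⟩
            by_cases hav : a = v
            · subst hav
              exact Submodule.mem_sup_right (Submodule.subset_span rfl)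
            · have ha' : a ∈ s' := Finset.mem_erase.2 ⟨hav, ha⟩
              exact Submodule.mem_sup_left (diff_mem_span ha' hu)
          have hfd1 := fd_span_diff s'
          have hfd2 : FiniteDimensional ℚ (Submodule.span ℚ ({v - u} : Set V)) :=
            FiniteDimensional.span_of_finite ℚ (Set.finite_singleton _)
          refine le_trans (Submodule.finrank_mono hsp) ?_
          refine le_trans (Submodule.finrank_add_le_finrank_add_finrank _ _) ?_
          have : Module.finrank ℚ (Submodule.span ℚ ({v - u} : Set V)) = 1 :=
            finrank_span_singleton (sub_ne_zero.2 (ne_of_gt (hlt u hu)))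
          omega
        have hrk_eq : rk s = rk s' + 1 := by omega
        -- disjointness of v + s from s' + s'
        have hnew : (s' + s').card + s.card ≤ (s + s).card := by
          have hsub1 : (s' + s') ∪ s.image (fun a => v + a) ⊆ s + s := by
            intro x hx
            rcases Finset.mem_union.1 hx with hx | hx
            · obtain ⟨a, ha, b, hb, hab⟩ := Finset.mem_add.1 hx
              exact Finset.mem_add.2 ⟨a, (Finset.erase_subset v s) ha, b,
                (Finset.erase_subset v s) hb, hab⟩
            · obtain ⟨a, ha, rfl⟩ := Finset.mem_image.1 hx
              exact Finset.mem_add.2 ⟨v, hvs, a, ha, rfl⟩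
          have hdisj : Disjoint (s' + s') (s.image (fun a => v + a)) := by
            rw [Finset.disjoint_right]
            intro x hx hcont
            obtain ⟨a, ha, rfl⟩ := Finset.mem_image.1 hx
            obtain ⟨b, hb, c, hc, hbc⟩ := Finset.mem_add.1 hcont
            by_cases hav : a = v
            · rw [hav] at hbc
              have heq : (b - u) + (c - u) = (v - u) + (v - u) := by
                have h2 : (b - u) + (c - u) - ((v - u) + (v - u)) = (b + c) - (v + v) := by
                  abel
                rw [hbc, sub_self] at h2
                exact sub_eq_zero.mp h2
              have hmem : (2 : ℚ) • (v - u) ∈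
                  Submodule.span ℚ ((s' : Set V) - (s' : Set V)) := by
                rw [two_smul, ← heq]
                exact add_mem (diff_mem_span hb hu) (diff_mem_span hc hu)
              have : v - u ∈ Submodule.span ℚ ((s' : Set V) - (s' : Set V)) := by
                have h3 := Submodule.smul_mem _ ((2 : ℚ)⁻¹) hmem
                rw [smul_smul, inv_mul_cancel₀ (by norm_num : (2:ℚ) ≠ 0), one_smul] at h3
                exact h3
              exact hcase this
            · have ha' : a ∈ s' := Finset.mem_erase.2 ⟨hav, ha⟩
              have heq : v - u = (b - u) + (c - u) - (a - u) := by
                have h2 : (b - u) + (c - u) - (a - u) - (v - u) = (b + c) - (v + a) := by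
                  abel
                rw [hbc, sub_self] at h2
                exact (sub_eq_zero.mp h2).symm
              have : v - u ∈ Submodule.span ℚ ((s' : Set V) - (s' : Set V)) := by
                rw [heq]
                exact sub_mem (add_mem (diff_mem_span hb hu) (diff_mem_span hc hu))
                  (diff_mem_span ha' hu)
              exact hcase this
          calc (s' + s').card + s.card
              = ((s' + s') ∪ s.image (fun a => v + a)).card := by
                rw [Finset.card_union_of_disjoint hdisj,
                  Finset.card_image_of_injective _ (add_right_injective v)]
            _ ≤ (s + s).card := Finset.card_le_card hsub1
        rw [hrk_eq] at *
        nlinarith [hIH, hnew, hcard']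

theorem freiman {s : Finset V} (hs : s.Nonempty) :
    2 * ((rk s + 1) * s.card) ≤ 2 * (s + s).card + rk s * (rk s + 1) :=
  freiman_aux s.card s le_rfl hs

theorem rank_of_small_doubling {s : Finset V} (hs : s.Nonempty) {K : ℕ}
    (h : (s + s).card ≤ K * s.card) : rk s + 1 ≤ 2 * K := by
  have h1 := freiman hs
  have h2 := rk_add_one_le_card hs
  obtain ⟨m, hm⟩ : ∃ m, s.card = m + 1 :=
    ⟨s.card - 1, by have := Finset.card_pos.2 hs; omega⟩
  set d := rk s
  have h3 : 2 * ((d + 1) * (m + 1)) ≤ 2 * (K * (m + 1)) + d * (d + 1) := by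
    rw [hm] at h1 h
    refine le_trans h1 (Nat.add_le_add_right ?_ _)
    exact Nat.mul_le_mul_left 2 h
  have h4 : d * (d + 1) ≤ m * (d + 1) := by
    have : d ≤ m := by omega
    exact Nat.mul_le_mul_right _ this
  have h5 : (d + 1) * (m + 2) + m * (d + 1) = 2 * ((d + 1) * (m + 1)) := by ring
  have h6 : (d + 1) * (m + 2) ≤ 2 * (K * (m + 1)) := by linarith
  have h7 : 2 * (K * (m + 1)) ≤ (2 * K) * (m + 2) := by
    have h71 : K * (m + 1) ≤ K * (m + 2) := Nat.mul_le_mul_left _ (by omega)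
    have h72 : (2 * K) * (m + 2) = 2 * (K * (m + 2)) := by ring
    linarith
  have h8 : (d + 1) * (m + 2) ≤ (2 * K) * (m + 2) := le_trans h6 h7
  exact Nat.le_of_mul_le_mul_right h8 (by omega)

end Freiman


/-! ## Prime factorization vectors -/

section Factorization

open Submodule Module

/-- factorization vector of a natural number, with rational coefficients -/
noncomputable def fQ (a : ℕ) : ℕ →₀ ℚ :=
  (Nat.factorization a).mapRange (fun n : ℕ => (n : ℚ)) (by norm_num)

lemma fQ_apply (a p : ℕ) : fQ a p = ((a.factorization p : ℕ) : ℚ) := by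
  unfold fQ
  exact Finsupp.mapRange_apply

lemma fQ_mul {a b : ℕ} (ha : a ≠ 0) (hb : b ≠ 0) : fQ (a * b) = fQ a + fQ b := by
  unfold fQ
  rw [Nat.factorization_mul ha hb]
  exact Finsupp.mapRange_add (by push_cast; exact fun x y => rfl) _ _

lemma fQ_inj {a b : ℕ} (ha : a ≠ 0) (hb : b ≠ 0) (h : fQ a = fQ b) : a = b := by
  unfold fQ at h
  have h2 : a.factorization = b.factorization :=
    Finsupp.mapRange_injective _ _ Nat.cast_injective h
  exact Nat.factorization_inj ha hb h2

lemma val_key {p : ℕ} (hp : p.Prime) {x y z w : ℕ}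
    (hx : x ≠ 0) (hy : y ≠ 0) (hz : z ≠ 0) (hw : w ≠ 0)
    (h : x + y = z + w)
    (h1 : x.factorization p < y.factorization p)
    (h2 : x.factorization p < z.factorization p)
    (h3 : x.factorization p < w.factorization p) : False := by
  set k := x.factorization p + 1 with hk
  have hdy : p ^ k ∣ y := (hp.pow_dvd_iff_le_factorization hy).2 h1
  have hdz : p ^ k ∣ z := (hp.pow_dvd_iff_le_factorization hz).2 h2
  have hdw : p ^ k ∣ w := (hp.pow_dvd_iff_le_factorization hw).2 h3
  have hxy : p ^ k ∣ x + y := h ▸ dvd_add hdz hdw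
  have hdx : p ^ k ∣ x := by
    have h4 := Nat.dvd_sub hxy hdy
    rwa [Nat.add_sub_cancel] at h4
  have h5 : k ≤ x.factorization p := (hp.pow_dvd_iff_le_factorization hx).1 hdx
  omega

lemma val_pairs {p : ℕ} (hp : p.Prime) {a b c d : ℕ}
    (ha : a ≠ 0) (hb : b ≠ 0) (hc : c ≠ 0) (hd : d ≠ 0) (h : a + b = c + d) :
    a.factorization p = b.factorization p ∨ a.factorization p = c.factorization p ∨
    a.factorization p = d.factorization p ∨ b.factorization p = c.factorization p ∨
    b.factorization p = d.factorization p ∨ c.factorization p = d.factorization p := by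
  by_contra hcon
  push_neg at hcon
  obtain ⟨h1, h2, h3, h4, h5, h6⟩ := hcon
  set va := a.factorization p
  set vb := b.factorization p
  set vc := c.factorization p
  set vd := d.factorization p
  have hm : min (min va vb) (min vc vd) = va ∨ min (min va vb) (min vc vd) = vb ∨
      min (min va vb) (min vc vd) = vc ∨ min (min va vb) (min vc vd) = vd := by omega
  rcases hm with hm | hm | hm | hm
  · exact val_key hp ha hb hc hd h (by omega) (by omega) (by omega)
  · exact val_key hp hb ha hc hd (by omega : b + a = c + d) (by omega) (by omega) (by omega)
  · exact val_key hp hc hd ha hb h.symm (by omega) (by omega) (by omega)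
  · exact val_key hp hd hc ha hb (by omega : d + c = a + b) (by omega) (by omega) (by omega)

lemma fiber_rk_lt {A : Finset ℕ} (hA : ∀ a ∈ A, 0 < a) {x y : ℕ} (hx : x ∈ A) (hy : y ∈ A)
    {p : ℕ} (hpne : x.factorization p ≠ y.factorization p) (m : ℕ) :
    rk ((A.filter (fun a => a.factorization p = m)).image fQ) < rk (A.image fQ) := by
  have hfd := fd_span_diff (A.image fQ)
  set W := Submodule.span ℚ (((A.image fQ : Finset (ℕ →₀ ℚ)) : Set (ℕ →₀ ℚ)) -
    ((A.image fQ : Finset (ℕ →₀ ℚ)) : Set (ℕ →₀ ℚ))) with hW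
  set φ : (ℕ →₀ ℚ) →ₗ[ℚ] ℚ := Finsupp.lapply p with hφ
  set W' := W ⊓ LinearMap.ker φ with hW'
  have hsub : Submodule.span ℚ
      ((((A.filter (fun a => a.factorization p = m)).image fQ : Finset (ℕ →₀ ℚ)) :
          Set (ℕ →₀ ℚ)) -
        (((A.filter (fun a => a.factorization p = m)).image fQ : Finset (ℕ →₀ ℚ)) :
          Set (ℕ →₀ ℚ))) ≤ W' := by
    rw [Submodule.span_le]
    rintro u ⟨g1, hg1, g2, hg2, rfl⟩
    obtain ⟨a1, ha1, rfl⟩ := Finset.mem_image.1 (Finset.mem_coe.1 hg1)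
    obtain ⟨a2, ha2, rfl⟩ := Finset.mem_image.1 (Finset.mem_coe.1 hg2)
    have ha1' := Finset.mem_filter.1 ha1
    have ha2' := Finset.mem_filter.1 ha2
    have hmem1 : fQ a1 - fQ a2 ∈ W :=
      diff_mem_span (Finset.mem_image_of_mem fQ ha1'.1) (Finset.mem_image_of_mem fQ ha2'.1)
    have hker : φ (fQ a1 - fQ a2) = 0 := by
      rw [map_sub]
      show fQ a1 p - fQ a2 p = 0
      rw [fQ_apply, fQ_apply, ha1'.2, ha2'.2, sub_self]
    exact Submodule.mem_inf.2 ⟨hmem1, LinearMap.mem_ker.2 hker⟩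
  have hlt : W' < W := by
    refine lt_of_le_of_ne inf_le_left ?_
    intro hcont
    have hmem : fQ x - fQ y ∈ W :=
      diff_mem_span (Finset.mem_image_of_mem fQ hx) (Finset.mem_image_of_mem fQ hy)
    rw [← hcont] at hmem
    have : φ (fQ x - fQ y) = 0 := LinearMap.mem_ker.1 (Submodule.mem_inf.1 hmem).2
    rw [map_sub] at this
    have h2 : fQ x p - fQ y p = 0 := this
    rw [fQ_apply, fQ_apply, sub_eq_zero] at h2
    exact hpne (Nat.cast_injective h2)
  have hfdW' : FiniteDimensional ℚ W' := Submodule.finiteDimensional_of_le inf_le_left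
  calc rk ((A.filter (fun a => a.factorization p = m)).image fQ)
      ≤ Module.finrank ℚ W' := Submodule.finrank_mono hsub
    _ < Module.finrank ℚ W := Submodule.finrank_lt_finrank_of_lt hlt
    _ = rk (A.image fQ) := rfl

lemma trivial_quad_bound {A : Finset ℕ} (h : A.card ≤ 1) :
    ((quad A A A A).card : ℝ) ≤ (A.card : ℝ) ^ 2 := by
  have h4 : (quad A A A A).card ≤ A.card ^ 4 := by
    refine le_trans (Finset.card_filter_le _ _) ?_
    rw [Finset.card_product, Finset.card_product, Finset.card_product]
    ring_nf
    exact le_rfl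
  have h5 : A.card ^ 4 ≤ A.card ^ 2 := by
    rcases Nat.le_one_iff_eq_zero_or_eq_one.1 h with h0 | h0 <;> rw [h0] <;> norm_num
  calc ((quad A A A A).card : ℝ) ≤ ((A.card ^ 2 : ℕ) : ℝ) := by
        exact_mod_cast le_trans h4 h5
    _ = (A.card : ℝ) ^ 2 := by push_cast; ring

theorem energy_rank : ∀ (n : ℕ) (A : Finset ℕ), (∀ a ∈ A, 0 < a) →
    rk (A.image fQ) ≤ n → ((quad A A A A).card : ℝ) ≤ 100 ^ n * (A.card : ℝ) ^ 2 := by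
  intro n
  induction n with
  | zero =>
    intro A hA hrk
    by_cases hc : A.card ≤ 1
    · simpa using trivial_quad_bound hc
    · exfalso
      obtain ⟨x, hx, y, hy, hxy⟩ := Finset.one_lt_card.1 (show 1 < A.card by omega)
      have hfne : fQ x ≠ fQ y := fun hcont =>
        hxy (fQ_inj (hA x hx).ne' (hA y hy).ne' hcont)
      have hfd := fd_span_diff (A.image fQ)
      have hbot : Submodule.span ℚ (((A.image fQ : Finset (ℕ →₀ ℚ)) : Set (ℕ →₀ ℚ)) -
          ((A.image fQ : Finset (ℕ →₀ ℚ)) : Set (ℕ →₀ ℚ))) = ⊥ :=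
        (Submodule.finrank_eq_zero).1 (Nat.le_zero.1 hrk)
      have hmem : fQ x - fQ y ∈ Submodule.span ℚ
          (((A.image fQ : Finset (ℕ →₀ ℚ)) : Set (ℕ →₀ ℚ)) -
            ((A.image fQ : Finset (ℕ →₀ ℚ)) : Set (ℕ →₀ ℚ))) :=
        diff_mem_span (Finset.mem_image_of_mem fQ hx) (Finset.mem_image_of_mem fQ hy)
      rw [hbot, Submodule.mem_bot, sub_eq_zero] at hmem
      exact hfne hmem
  | succ n IH =>
    intro A hA hrk
    by_cases hc : A.card ≤ 1
    · refine le_trans (trivial_quad_bound hc) ?_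
      have h1 : (1 : ℝ) ≤ 100 ^ (n + 1) := one_le_pow₀ (by norm_num)
      nlinarith [sq_nonneg ((A.card : ℝ))]
    · obtain ⟨x, hx, y, hy, hxy⟩ := Finset.one_lt_card.1 (show 1 < A.card by omega)
      have hxpos := hA x hx
      have hypos := hA y hy
      have hfne : fQ x ≠ fQ y := fun hcont =>
        hxy (fQ_inj hxpos.ne' hypos.ne' hcont)
      obtain ⟨p, hp⟩ := Finsupp.ne_iff.1 hfne
      have hvne : x.factorization p ≠ y.factorization p := fun h =>
        hp (by rw [fQ_apply, fQ_apply, h])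
      have hpp : p.Prime := by
        by_cases h0 : x.factorization p = 0
        · have h1 : y.factorization p ≠ 0 := fun hcont => hvne (by omega)
          have h2 : p ∈ y.factorization.support := Finsupp.mem_support_iff.2 h1
          rw [Nat.support_factorization] at h2
          exact Nat.prime_of_mem_primeFactors h2
        · have h2 : p ∈ x.factorization.support := Finsupp.mem_support_iff.2 h0
          rw [Nat.support_factorization] at h2
          exact Nat.prime_of_mem_primeFactors h2
      set v : ℕ → ℕ := fun a => a.factorization p with hv
      have hmin : ∀ a b c d, a ∈ A → b ∈ A → c ∈ A → d ∈ A → a + b = c + d →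
          v a = v b ∨ v a = v c ∨ v a = v d ∨ v b = v c ∨ v b = v d ∨ v c = v d :=
        fun a b c d ha hb hc' hd he =>
          val_pairs hpp (hA a ha).ne' (hA b hb).ne' (hA c hc').ne' (hA d hd).ne' he
      have hmaster := en_master v hmin
      -- bound each fiber by the induction hypothesis
      have hfiber : ∀ m ∈ A.image v,
          Real.sqrt (en (A.filter (fun x => v x = m))) ≤
            10 ^ n * ((A.filter (fun x => v x = m)).card : ℝ) := by
        intro m _
        have hsubA : A.filter (fun x => v x = m) ⊆ A := Finset.filter_subset _ _
        have hposf : ∀ a ∈ A.filter (fun x => v x = m), 0 < a := fun a ha => hA a (hsubA ha)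
        have hrkf : rk ((A.filter (fun x => v x = m)).image fQ) ≤ n := by
          have h5 : A.filter (fun x => v x = m) = A.filter (fun a => a.factorization p = m) :=
            rfl
          rw [h5]
          have := fiber_rk_lt hA hx hy hvne m
          omega
        have hIH := IH _ hposf hrkf
        have h100 : ((10 : ℝ) ^ n) ^ 2 = 100 ^ n := by
          rw [← pow_mul, mul_comm n 2, pow_mul]; norm_num
        have hsq : en (A.filter (fun x => v x = m)) ≤
            (10 ^ n * ((A.filter (fun x => v x = m)).card : ℝ)) ^ 2 := by
          rw [mul_pow, h100]
          exact hIH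
        calc Real.sqrt (en (A.filter (fun x => v x = m)))
            ≤ Real.sqrt ((10 ^ n * ((A.filter (fun x => v x = m)).card : ℝ)) ^ 2) :=
              Real.sqrt_le_sqrt hsq
          _ = 10 ^ n * ((A.filter (fun x => v x = m)).card : ℝ) :=
              Real.sqrt_sq (by positivity)
      have hsumcard : ∑ m ∈ A.image v, ((A.filter (fun x => v x = m)).card : ℝ) =
          (A.card : ℝ) := by
        rw [← Nat.cast_sum]
        congr 1
        exact (Finset.card_eq_sum_card_fiberwise
          (fun a ha => Finset.mem_image_of_mem v ha)).symm
      have hsum : ∑ m ∈ A.image v, Real.sqrt (en (A.filter (fun x => v x = m))) ≤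
          10 ^ n * (A.card : ℝ) := by
        calc ∑ m ∈ A.image v, Real.sqrt (en (A.filter (fun x => v x = m)))
            ≤ ∑ m ∈ A.image v, 10 ^ n * ((A.filter (fun x => v x = m)).card : ℝ) :=
              Finset.sum_le_sum hfiber
          _ = 10 ^ n * (A.card : ℝ) := by rw [← Finset.mul_sum, hsumcard]
      have hC : en A ≤ 10 ^ (n + 1) * (A.card : ℝ) * Real.sqrt (en A) := by
        refine le_trans hmaster ?_
        have hs : (0:ℝ) ≤ Real.sqrt (en A) := Real.sqrt_nonneg _
        have h2 : 10 * (∑ m ∈ A.image v, Real.sqrt (en (A.filter (fun x => v x = m)))) ≤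
            10 * (10 ^ n * (A.card : ℝ)) := by linarith
        calc 10 * (∑ m ∈ A.image v, Real.sqrt (en (A.filter (fun x => v x = m)))) *
              Real.sqrt (en A)
            ≤ 10 * (10 ^ n * (A.card : ℝ)) * Real.sqrt (en A) := by
              exact mul_le_mul_of_nonneg_right h2 hs
          _ = 10 ^ (n + 1) * (A.card : ℝ) * Real.sqrt (en A) := by ring
      -- finish
      have henn := en_nonneg A
      have hss : Real.sqrt (en A) * Real.sqrt (en A) = en A := Real.mul_self_sqrt henn
      have hfin : en A ≤ 100 ^ (n + 1) * (A.card : ℝ) ^ 2 := by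
        by_cases hz : Real.sqrt (en A) = 0
        · have : en A = 0 := by rw [← hss, hz, mul_zero]
          rw [this]
          positivity
        · have hzpos : 0 < Real.sqrt (en A) :=
            lt_of_le_of_ne (Real.sqrt_nonneg _) (Ne.symm hz)
          have hC' : Real.sqrt (en A) * Real.sqrt (en A) ≤
              10 ^ (n + 1) * (A.card : ℝ) * Real.sqrt (en A) := by
            rw [hss]; exact hC
          have h3 : Real.sqrt (en A) ≤ 10 ^ (n + 1) * (A.card : ℝ) :=
            le_of_mul_le_mul_right hC' hzpos
          have h4 : en A ≤ (10 ^ (n + 1) * (A.card : ℝ)) ^ 2 := by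
            rw [← hss]
            have := mul_le_mul h3 h3 (Real.sqrt_nonneg _) (by positivity)
            nlinarith
          have h100 : ((10 : ℝ) ^ (n + 1)) ^ 2 = 100 ^ (n + 1) := by
            rw [← pow_mul, mul_comm (n + 1) 2, pow_mul]; norm_num
          calc en A ≤ (10 ^ (n + 1) * (A.card : ℝ)) ^ 2 := h4
            _ = 100 ^ (n + 1) * (A.card : ℝ) ^ 2 := by rw [mul_pow, h100]
      exact hfin

end Factorization


end Chang

open Chang in
/-- Chang's theorem: there is an absolute constant `c > 0` such that any finite set of
positive integers with `|AA| ≤ K|A|` has additive energy at most `c^K |A|^2`. -/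
theorem chang_energy : ∃ c : ℝ, 0 < c ∧
    ∀ (K : ℕ), 0 < K → ∀ A : Finset ℕ, (∀ a ∈ A, 0 < a) →
      (A * A).card ≤ K * A.card →
      (addEnergy A : ℝ) ≤ c ^ K * (A.card : ℝ) ^ 2 := by
  refine ⟨10000, by norm_num, ?_⟩
  intro K hK A hpos hmul
  rcases Finset.eq_empty_or_nonempty A with rfl | hne
  · have h0 : _root_.addEnergy (∅ : Finset ℕ) = 0 := by
      simp [_root_.addEnergy]
    rw [h0]
    norm_num
  · set s : Finset (ℕ →₀ ℚ) := A.image fQ with hs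
    have hinj : Set.InjOn fQ (A : Set ℕ) := fun a ha b hb h =>
      fQ_inj (hpos a ha).ne' (hpos b hb).ne' h
    have hscard : s.card = A.card := Finset.card_image_of_injOn hinj
    have hss : s + s = (A * A).image fQ := by
      ext z
      constructor
      · intro hz
        obtain ⟨u, hu, w, hw, rfl⟩ := Finset.mem_add.1 hz
        obtain ⟨a, ha, rfl⟩ := Finset.mem_image.1 hu
        obtain ⟨b, hb, rfl⟩ := Finset.mem_image.1 hw
        exact Finset.mem_image.2 ⟨a * b, Finset.mul_mem_mul ha hb,
          fQ_mul (hpos a ha).ne' (hpos b hb).ne'⟩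
      · intro hz
        obtain ⟨x, hx, rfl⟩ := Finset.mem_image.1 hz
        obtain ⟨a, ha, b, hb, rfl⟩ := Finset.mem_mul.1 hx
        rw [fQ_mul (hpos a ha).ne' (hpos b hb).ne']
        exact Finset.mem_add.2 ⟨fQ a, Finset.mem_image_of_mem _ ha,
          fQ b, Finset.mem_image_of_mem _ hb, rfl⟩
    have hdoub : (s + s).card ≤ K * s.card := by
      rw [hss, hscard]
      exact le_trans Finset.card_image_le hmul
    letI iG : AddCommGroup (Lex (ℕ →₀ ℚ)) := inferInstanceAs (AddCommGroup (ℕ →₀ ℚ))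
    letI iM : Module ℚ (Lex (ℕ →₀ ℚ)) := inferInstanceAs (Module ℚ (ℕ →₀ ℚ))
    letI iD : DecidableEq (Lex (ℕ →₀ ℚ)) := inferInstanceAs (DecidableEq (ℕ →₀ ℚ))
    letI iC1 : AddLeftStrictMono (Lex (ℕ →₀ ℚ)) := by
      exact Finsupp.Lex.addLeftStrictMono
    letI iC2 : AddRightStrictMono (Lex (ℕ →₀ ℚ)) := by
      exact Finsupp.Lex.addRightStrictMono
    have hrkLex := rank_of_small_doubling (V := Lex (ℕ →₀ ℚ)) (s := s)
      (hne.image fQ) (K := K) hdoub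
    have hrk : rk s + 1 ≤ 2 * K := hrkLex
    have hE := energy_rank (2 * K - 1) A hpos (by rw [← hs]; omega)
    have h1 : (addEnergy A : ℝ) = ((quad A A A A).card : ℝ) := by rw [addEnergy_eq]
    rw [h1]
    refine le_trans hE ?_
    have h2 : ((100 : ℝ)) ^ (2 * K - 1) ≤ 100 ^ (2 * K) :=
      pow_le_pow_right₀ (by norm_num) (by omega)
    have h3 : ((100 : ℝ)) ^ (2 * K) = 10000 ^ K := by
      rw [pow_mul]; norm_num
    have h4 : ((100 : ℝ)) ^ (2 * K - 1) ≤ 10000 ^ K := h3 ▸ h2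
    exact mul_le_mul_of_nonneg_right h4 (by positivity)
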